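/- Let a be a rational number, let r ≥ 0 be an integer, and for i ∈ {1,2} let G_i be a graph with n_i vertices such that the total number of cliques in G_i (including the empty clique) equals a(n_i - r) + 2^r. Let G be a graph obtained by pasting G_1 and G_2 on an r-clique. Then G has n = n_1 + n_2 - r vertices and the total number of cliques in G equals a(n - r) + 2^r. -/

import Mathlib

/-- The total number of cliques of `G` (including the empty clique). -/
noncomputable def SimpleGraph.totalCliqueCount {V : Type*} (G : SimpleGraph V) : ℕ :=
  {s : Finset V | G.IsClique (s : Set V)}.ncard

open Classical in
lemma induce_count {V : Type} [Fintype V] [DecidableEq V] (G : SimpleGraph V) (A : Finset V) :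
    (G.induce (↑A : Set V)).totalCliqueCount =
      (Finset.univ.filter (fun s : Finset V => G.IsClique (↑s : Set V) ∧ s ⊆ A)).card := by
  classical
  unfold SimpleGraph.totalCliqueCount
  rw [Set.ncard_eq_toFinset_card']
  apply Finset.card_bij (fun s _ => s.map (Function.Embedding.subtype _))
  · intro s hs
    simp only [Set.mem_toFinset, Set.mem_setOf_eq] at hs
    simp only [Finset.mem_filter, Finset.mem_univ, true_and]
    constructor
    · intro x hx y hy hxy
      simp only [Finset.coe_map, Set.mem_image, Finset.mem_coe] at hx hy
      obtain ⟨x', hx', rfl⟩ := hx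
      obtain ⟨y', hy', rfl⟩ := hy
      have := hs hx' hy' (by rintro rfl; exact hxy rfl)
      exact this
    · intro x hx
      simp only [Finset.mem_map, Function.Embedding.coe_subtype] at hx
      obtain ⟨x', _, rfl⟩ := hx
      exact x'.2
  · intro s hs t ht h
    exact Finset.map_injective _ h
  · intro t ht
    simp only [Finset.mem_filter, Finset.mem_univ, true_and] at ht
    refine ⟨t.subtype (fun x => x ∈ A), ?_, ?_⟩
    · simp only [Set.mem_toFinset, Set.mem_setOf_eq]
      intro x hx y hy hxy
      simp only [Finset.mem_coe, Finset.mem_subtype] at hx hy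
      exact ht.1 hx hy (fun h => hxy (Subtype.ext h))
    · ext x
      simp only [Finset.mem_map, Finset.mem_subtype, Function.Embedding.coe_subtype]
      constructor
      · rintro ⟨⟨y, hyA⟩, hy, rfl⟩; exact hy
      · intro hx; exact ⟨⟨x, ht.2 hx⟩, hx, rfl⟩

/-- If `G` is obtained by pasting `G₁` and `G₂` on an `r`-clique (here `G₁` and `G₂` are
the subgraphs of `G` induced on `A` and `B`, where `A ∪ B` is everything, `A ∩ B` is an
`r`-clique, and there are no edges between `A \ B` and `B \ A`), and each `Gᵢ` on `nᵢ`
vertices has exactly `a(nᵢ - r) + 2^r` cliques in total, then `G` has `n = n₁ + n₂ - r`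
vertices and exactly `a(n - r) + 2^r` cliques in total. -/
theorem totalCliqueCount_paste (a : ℚ) (r : ℕ)
    (V : Type) [Fintype V] [DecidableEq V] (G : SimpleGraph V)
    (A B : Finset V) (n₁ n₂ : ℕ) (hn₁ : A.card = n₁) (hn₂ : B.card = n₂)
    (hunion : A ∪ B = Finset.univ) (hcard : (A ∩ B).card = r)
    (hclique : G.IsClique (↑(A ∩ B) : Set V))
    (hcross : ∀ u ∈ A \ B, ∀ v ∈ B \ A, ¬ G.Adj u v)
    (h₁ : ((G.induce (↑A : Set V)).totalCliqueCount : ℚ) = a * ((n₁ : ℚ) - r) + 2 ^ r)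
    (h₂ : ((G.induce (↑B : Set V)).totalCliqueCount : ℚ) = a * ((n₂ : ℚ) - r) + 2 ^ r) :
    Fintype.card V = n₁ + n₂ - r ∧
    (G.totalCliqueCount : ℚ) = a * ((Fintype.card V : ℚ) - r) + 2 ^ r := by
  classical
  have hcardV : Fintype.card V + r = n₁ + n₂ := by
    rw [← hn₁, ← hn₂, ← hcard, ← Finset.card_union_add_card_inter, hunion, Finset.card_univ]
  have hrn₁ : r ≤ n₁ := by rw [← hcard, ← hn₁]; exact Finset.card_le_card (Finset.inter_subset_left)
  -- the three filtered sets
  set FA := Finset.univ.filter (fun s : Finset V => G.IsClique (↑s : Set V) ∧ s ⊆ A) with hFA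
  set FB := Finset.univ.filter (fun s : Finset V => G.IsClique (↑s : Set V) ∧ s ⊆ B) with hFB
  set FT := Finset.univ.filter (fun s : Finset V => G.IsClique (↑s : Set V)) with hFT
  have hT : G.totalCliqueCount = FT.card := by
    unfold SimpleGraph.totalCliqueCount
    rw [Set.ncard_eq_toFinset_card']
    congr 1
    ext s
    simp [hFT]
  have hAB : FA ∪ FB = FT := by
    ext s
    simp only [hFA, hFB, hFT, Finset.mem_union, Finset.mem_filter, Finset.mem_univ, true_and]
    constructor
    · rintro (⟨h, _⟩ | ⟨h, _⟩) <;> exact h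
    · intro hs
      by_contra hc
      push_neg at hc
      obtain ⟨hA, hB⟩ := hc
      obtain ⟨v, hvs, hvA⟩ := Finset.not_subset.mp (fun h => (hA hs h).elim : ¬ s ⊆ A)
      obtain ⟨u, hus, huB⟩ := Finset.not_subset.mp (fun h => (hB hs h).elim : ¬ s ⊆ B)
      have hvB : v ∈ B := by
        have : v ∈ A ∪ B := by rw [hunion]; exact Finset.mem_univ v
        simpa [hvA] using Finset.mem_union.mp this
      have huA : u ∈ A := by
        have : u ∈ A ∪ B := by rw [hunion]; exact Finset.mem_univ u
        simpa [huB] using Finset.mem_union.mp this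
      have hne : u ≠ v := fun h => hvA (h ▸ huA)
      exact hcross u (Finset.mem_sdiff.mpr ⟨huA, huB⟩) v (Finset.mem_sdiff.mpr ⟨hvB, hvA⟩)
        (hs hus hvs hne)
  have hABi : FA ∩ FB = (A ∩ B).powerset := by
    ext s
    simp only [hFA, hFB, Finset.mem_inter, Finset.mem_filter, Finset.mem_univ, true_and,
      Finset.mem_powerset, Finset.subset_inter_iff]
    constructor
    · rintro ⟨⟨_, h1⟩, ⟨_, h2⟩⟩; exact ⟨h1, h2⟩
    · rintro ⟨h1, h2⟩
      have hcl : G.IsClique (↑s : Set V) := hclique.subset (by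
        intro x hx
        simp only [Finset.coe_inter, Set.mem_inter_iff, Finset.mem_coe] at *
        exact ⟨h1 hx, h2 hx⟩)
      exact ⟨⟨hcl, h1⟩, ⟨hcl, h2⟩⟩
  have hkey : FT.card + 2 ^ r = FA.card + FB.card := by
    rw [← hAB, ← hcard, ← Finset.card_powerset, ← hABi, Finset.card_union_add_card_inter]
  have e1 : (G.induce (↑A : Set V)).totalCliqueCount = FA.card := induce_count G A
  have e2 : (G.induce (↑B : Set V)).totalCliqueCount = FB.card := induce_count G B
  constructor
  · omega
  · have hq : ((Fintype.card V : ℚ)) = (n₁ : ℚ) + n₂ - r := by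
      have := congrArg (Nat.cast : ℕ → ℚ) hcardV
      push_cast at this
      linarith
    have hqkey : (FT.card : ℚ) + 2 ^ r = FA.card + FB.card := by
      exact_mod_cast congrArg (Nat.cast : ℕ → ℚ) hkey
    rw [← e1, ← e2, h₁, h₂] at hqkey
    rw [hT, hq]
    linarith
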